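/- Let k be a field of characteristic zero and B a standard graded artinian k-algebra. If A = B ⊗_k k[x]/(x^d) has the strong Lefschetz property for some integer d ≥ 1, then B has the strong Lefschetz property. -/

import Mathlib

open scoped BigOperators

/-- Multiplication by `a` is injective as a map on the subspace `V`. -/
def MulInjOn {k R : Type*} [Field k] [CommRing R] [Algebra k R]
    (V : Submodule k R) (a : R) : Prop :=
  ∀ v ∈ V, a * v = 0 → v = 0

/-- Multiplication by `a` maps the subspace `V` onto the subspace `W`. -/
def MulSurjOnto {k R : Type*} [Field k] [CommRing R] [Algebra k R]
    (V W : Submodule k R) (a : R) : Prop :=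
  ∀ w ∈ W, ∃ v ∈ V, a * v = w

/-- The multiplication map `·a : V → W` has full rank: it is injective or surjective. -/
def MulFullRank {k R : Type*} [Field k] [CommRing R] [Algebra k R]
    (V W : Submodule k R) (a : R) : Prop :=
  MulInjOn V a ∨ MulSurjOnto V W a

/-- `𝒜` is the grading of a standard graded artinian `k`-algebra structure on `R`:
the components form an internal direct sum, vanish in negative degrees, are
multiplicative, the degree-zero part is spanned by `1`, the algebra is generated in
degree one, and `R` is a finite-dimensional `k`-vector space (equivalently, artinian). -/
structure IsStdGradedArtinian (k : Type*) [Field k] (R : Type*) [CommRing R] [Algebra k R]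
    (𝒜 : ℤ → Submodule k R) : Prop where
  internal : DirectSum.IsInternal 𝒜
  one_mem : (1 : R) ∈ 𝒜 0
  mul_mem : ∀ {i j : ℤ} {a b : R}, a ∈ 𝒜 i → b ∈ 𝒜 j → a * b ∈ 𝒜 (i + j)
  neg_bot : ∀ i : ℤ, i < 0 → 𝒜 i = ⊥
  zero_spanOne : 𝒜 0 = Submodule.span k {(1 : R)}
  succ_eq : ∀ i : ℤ, 0 ≤ i → 𝒜 (i + 1) = 𝒜 1 * 𝒜 i
  finiteDim : FiniteDimensional k R

/-- `A` (graded by `ℬ`) is the extension `B ⊗ₖ k[x]/(x^d)` of `B` (graded by `𝒜`):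
`φ` is the canonical inclusion of `B`, `x` has degree one with `x^d = 0`, and each
graded component decomposes as `ℬ j = ⊕_{q=0}^{d-1} x^q · φ(𝒜 (j - q))`. -/
structure IsCIExtension {k B A : Type*} [Field k] [CommRing B] [Algebra k B]
    [CommRing A] [Algebra k A]
    (𝒜 : ℤ → Submodule k B) (ℬ : ℤ → Submodule k A)
    (φ : B →ₐ[k] A) (x : A) (d : ℕ) : Prop where
  map_mem : ∀ (j : ℤ) (b : B), b ∈ 𝒜 j → φ b ∈ ℬ j
  x_mem : x ∈ ℬ 1
  x_pow : x ^ d = 0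
  decomp_mem : ∀ (j : ℤ) (f : Fin d → B), (∀ q : Fin d, f q ∈ 𝒜 (j - ((q : ℕ) : ℤ))) →
    (∑ q : Fin d, x ^ (q : ℕ) * φ (f q)) ∈ ℬ j
  decomp_exists : ∀ (j : ℤ), ∀ c ∈ ℬ j, ∃ f : Fin d → B,
    (∀ q : Fin d, f q ∈ 𝒜 (j - ((q : ℕ) : ℤ))) ∧ c = ∑ q : Fin d, x ^ (q : ℕ) * φ (f q)
  decomp_unique : ∀ (j : ℤ) (f : Fin d → B), (∀ q : Fin d, f q ∈ 𝒜 (j - ((q : ℕ) : ℤ))) →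
    (∑ q : Fin d, x ^ (q : ℕ) * φ (f q)) = 0 → ∀ q : Fin d, f q = 0

/-- `A` (graded by `ℬ`) is the extension `B ⊗ₖ k[x₁,…,xₙ]/(x₁^{d₁},…,xₙ^{dₙ})` of `B`
(graded by `𝒜`). -/
structure IsMultiCIExtension {k B A : Type*} [Field k] [CommRing B] [Algebra k B]
    [CommRing A] [Algebra k A] {n : ℕ}
    (𝒜 : ℤ → Submodule k B) (ℬ : ℤ → Submodule k A)
    (φ : B →ₐ[k] A) (x : Fin n → A) (dv : Fin n → ℕ) : Prop where
  map_mem : ∀ (j : ℤ) (b : B), b ∈ 𝒜 j → φ b ∈ ℬ j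
  x_mem : ∀ m : Fin n, x m ∈ ℬ 1
  x_pow : ∀ m : Fin n, x m ^ dv m = 0
  decomp_mem : ∀ (j : ℤ) (f : ((m : Fin n) → Fin (dv m)) → B),
    (∀ e, f e ∈ 𝒜 (j - ∑ m : Fin n, ((e m : ℕ) : ℤ))) →
    (∑ e : (m : Fin n) → Fin (dv m), (∏ m : Fin n, x m ^ ((e m : ℕ))) * φ (f e)) ∈ ℬ j
  decomp_exists : ∀ (j : ℤ), ∀ c ∈ ℬ j, ∃ f : ((m : Fin n) → Fin (dv m)) → B,
    (∀ e, f e ∈ 𝒜 (j - ∑ m : Fin n, ((e m : ℕ) : ℤ))) ∧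
    c = ∑ e : (m : Fin n) → Fin (dv m), (∏ m : Fin n, x m ^ ((e m : ℕ))) * φ (f e)
  decomp_unique : ∀ (j : ℤ) (f : ((m : Fin n) → Fin (dv m)) → B),
    (∀ e, f e ∈ 𝒜 (j - ∑ m : Fin n, ((e m : ℕ) : ℤ))) →
    (∑ e : (m : Fin n) → Fin (dv m), (∏ m : Fin n, x m ^ ((e m : ℕ))) * φ (f e)) = 0 →
    ∀ e, f e = 0

/-- The weak Lefschetz property. -/
def HasWLP {k R : Type*} [Field k] [CommRing R] [Algebra k R]
    (𝒜 : ℤ → Submodule k R) : Prop :=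
  ∃ ℓ ∈ 𝒜 1, ∀ i : ℤ, 0 ≤ i → MulFullRank (𝒜 i) (𝒜 (i + 1)) ℓ

/-- The strong Lefschetz property. -/
def HasSLP {k R : Type*} [Field k] [CommRing R] [Algebra k R]
    (𝒜 : ℤ → Submodule k R) : Prop :=
  ∃ ℓ ∈ 𝒜 1, ∀ i : ℤ, 0 ≤ i → ∀ t : ℕ, 1 ≤ t → MulFullRank (𝒜 i) (𝒜 (i + t)) (ℓ ^ t)

/-- The Hilbert function of the graded algebra. -/
noncomputable def hilb {k R : Type*} [Field k] [CommRing R] [Algebra k R]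
    (𝒜 : ℤ → Submodule k R) (i : ℤ) : ℕ :=
  Module.finrank k (𝒜 i)

/-- The algebra is almost centered. -/
def AlmostCentered {k R : Type*} [Field k] [CommRing R] [Algebra k R]
    (𝒜 : ℤ → Submodule k R) : Prop :=
  ∀ i j : ℤ, i < j →
    (hilb 𝒜 i < hilb 𝒜 j → ∀ s : ℕ, hilb 𝒜 (i - s) ≤ hilb 𝒜 (j + s)) ∧
    (hilb 𝒜 j < hilb 𝒜 i → ∀ s : ℕ, hilb 𝒜 (j + s) ≤ hilb 𝒜 (i - s))

/-- `binomZ t j` is the binomial coefficient `t` choose `j` for an integer `j`,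
equal to `0` for `j < 0` or `j > t`. -/
def binomZ (t : ℕ) (j : ℤ) : ℤ := if 0 ≤ j then (t.choose j.toNat : ℤ) else 0

/-- The `(d-p) × (d-p)` integer matrix `C_{t,p,d}` whose `(r,c)` entry (with `1 ≤ r,c ≤ d-p`)
is `binom(t, d+1-r-c)`. -/
def Cmat (t p d : ℕ) : Matrix (Fin (d - p)) (Fin (d - p)) ℤ :=
  Matrix.of fun r c => binomZ t ((d : ℤ) - 1 - (r : ℕ) - (c : ℕ))

/-- The characteristic of `k` is zero, or a prime not dividing the integer `N`. -/
def CharCond (k : Type*) [Field k] (N : ℤ) : Prop :=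
  CharZero k ∨ ∃ p : ℕ, p.Prime ∧ CharP k p ∧ ¬ ((p : ℤ) ∣ N)

lemma expand_pow_mul {k A : Type*} [Field k] [CommRing A] [Algebra k A]
    (lA x : A) (c : k) (e : ℕ) (hx : x ^ (e + 1) = 0)
    (T : ℕ) (hT : e ≤ T) (q : ℕ) (hq : q ≤ e) (b : A) :
    (lA + c • x) ^ T * (x ^ q * b) =
      ∑ p : Fin (e + 1),
        ((T.choose ((T - (p : ℕ)) + q) : k) * c ^ ((p : ℕ) - q)) •
          (x ^ (p : ℕ) * (lA ^ ((T - (p : ℕ)) + q) * b)) := by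
  have key : ∀ m : ℕ, (c • x) ^ m * lA ^ (T - m) * ((T.choose m : ℕ) : A) * (x ^ q * b)
      = ((T.choose m : k) * c ^ m) • (x ^ (m + q) * (lA ^ (T - m) * b)) := by
    intro m
    simp only [smul_pow, Algebra.smul_def, map_mul, map_pow, map_natCast, pow_add]
    ring
  rw [add_comm lA (c • x), add_pow, Finset.sum_mul]
  simp only [key]
  rw [Fin.sum_univ_eq_sum_range (fun p =>
    ((T.choose ((T - p) + q) : k) * c ^ (p - q)) •
      (x ^ p * (lA ^ ((T - p) + q) * b)))]
  have h1 : ∑ m ∈ Finset.range (T + 1),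
      ((T.choose m : k) * c ^ m) • (x ^ (m + q) * (lA ^ (T - m) * b))
      = ∑ m ∈ Finset.range (e + 1 - q),
      ((T.choose m : k) * c ^ m) • (x ^ (m + q) * (lA ^ (T - m) * b)) := by
    refine (Finset.sum_subset (Finset.range_subset_range.mpr (by omega)) ?_).symm
    intro m hm hmn
    simp only [Finset.mem_range] at hm hmn
    have hxz : x ^ (m + q) = 0 := by
      rw [show m + q = (e + 1) + (m + q - (e + 1)) by omega, pow_add, hx, zero_mul]
    rw [hxz, zero_mul, smul_zero]
  have h2 : ∑ p ∈ Finset.range (e + 1),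
      ((T.choose ((T - p) + q) : k) * c ^ (p - q)) • (x ^ p * (lA ^ ((T - p) + q) * b))
      = ∑ p ∈ Finset.Ico q (e + 1),
      ((T.choose ((T - p) + q) : k) * c ^ (p - q)) • (x ^ p * (lA ^ ((T - p) + q) * b)) := by
    refine (Finset.sum_subset ?_ ?_).symm
    · intro p hp
      simp only [Finset.mem_Ico] at hp
      simp only [Finset.mem_range]
      omega
    · intro p hp hpn
      simp only [Finset.mem_range] at hp
      simp only [Finset.mem_Ico] at hpn
      have : T < (T - p) + q := by omega
      rw [Nat.choose_eq_zero_of_lt this]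
      simp
  rw [h1, h2, Finset.sum_Ico_eq_sum_range]
  apply Finset.sum_congr (by congr 1)
  intro j hj
  simp only [Finset.mem_range] at hj
  rw [show (T - (q + j)) + q = T - j by omega, show (q + j) - q = j by omega,
    Nat.choose_symm (by omega : j ≤ T), add_comm q j]


/-- Over a field `k` of characteristic zero, if
`A = B ⊗ₖ k[x]/(x^d)` has the strong Lefschetz property for some `d ≥ 1`, then the
standard graded artinian `k`-algebra `B` has the strong Lefschetz property. -/
theorem statement_14 {k B A : Type} [Field k] [CharZero k]
    [CommRing B] [Algebra k B] [CommRing A] [Algebra k A]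
    (𝒜 : ℤ → Submodule k B) (ℬ : ℤ → Submodule k A)
    (hB : IsStdGradedArtinian k B 𝒜) (hA : IsStdGradedArtinian k A ℬ)
    (d : ℕ) (hd : 1 ≤ d) (φ : B →ₐ[k] A) (x : A)
    (hext : IsCIExtension 𝒜 ℬ φ x d)
    (hSLP : HasSLP ℬ) :
    HasSLP 𝒜 := by
  obtain ⟨e, rfl⟩ : ∃ e, d = e + 1 := ⟨d - 1, by omega⟩
  obtain ⟨L, hL1, hLfr⟩ := hSLP
  obtain ⟨f0, hf0mem, hLdec⟩ := hext.decomp_exists 1 L hL1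
  set ℓ : B := f0 0 with hℓdef
  have hℓ : ℓ ∈ 𝒜 1 := by simpa using hf0mem 0
  -- write L = φ ℓ + c • x
  have hLform : ∃ c : k, L = φ ℓ + c • x := by
    cases e with
    | zero =>
      refine ⟨0, ?_⟩
      have hx0 : x = 0 := by
        have := hext.x_pow
        rwa [pow_one] at this
      rw [hLdec]
      simp [hx0]
      rfl
    | succ e' =>
      have hzero : ∀ q : Fin (e' + 2), 2 ≤ (q : ℕ) → f0 q = 0 := by
        intro q hq
        have h := hf0mem q
        rw [hB.neg_bot _ (by omega)] at h
        simpa using h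
      have hone : ((1 : Fin (e' + 2)) : ℕ) = 1 := rfl
      obtain ⟨c, hc⟩ : ∃ c : k, f0 1 = c • 1 := by
        have h0 := hf0mem 1
        rw [hone] at h0
        norm_num at h0
        rw [hB.zero_spanOne] at h0
        obtain ⟨a, ha⟩ := Submodule.mem_span_singleton.mp h0
        exact ⟨a, ha.symm⟩
      refine ⟨c, ?_⟩
      rw [hLdec, Fin.sum_univ_succ, Fin.sum_univ_succ]
      have htail : ∀ q : Fin e',
          x ^ (((q.succ).succ : Fin (e' + 2)) : ℕ) * φ (f0 (q.succ).succ) = 0 := by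
        intro q
        rw [hzero _ (by simp [Fin.val_succ])]
        simp
      rw [Finset.sum_eq_zero (fun q _ => htail q)]
      rw [Fin.succ_zero_eq_one, hone, hc]
      simp [mul_smul_comm]
      rfl
  obtain ⟨c, hc⟩ := hLform
  refine ⟨ℓ, hℓ, ?_⟩
  intro i hi t ht
  set T : ℕ := t + e with hTdef
  -- powers of ℓ are graded
  have hpow : ∀ n : ℕ, ℓ ^ n ∈ 𝒜 (n : ℤ) := by
    intro n
    induction n with
    | zero => simpa using hB.one_mem
    | succ n ih =>
      have h := hB.mul_mem ih hℓ
      rw [pow_succ]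
      have : ((n : ℤ) + 1) = ((n + 1 : ℕ) : ℤ) := by push_cast; ring
      rwa [this] at h
  rcases hLfr i hi T (by omega) with hinj | hsurj
  · -- injectivity descends
    left
    intro u hu hut
    have hker : L ^ T * φ u = 0 := by
      rw [hc, add_comm (φ ℓ) (c • x), add_pow, Finset.sum_mul]
      apply Finset.sum_eq_zero
      intro m hm
      by_cases hme : e + 1 ≤ m
      · have hxm : (c • x) ^ m = 0 := by
          rw [smul_pow, show m = (e + 1) + (m - (e + 1)) by omega, pow_add x, hext.x_pow,
            zero_mul, smul_zero]
        rw [hxm, zero_mul, zero_mul, zero_mul]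
      · have h2 : φ ℓ ^ (T - m) * φ u = 0 := by
          rw [← map_pow, ← map_mul, show T - m = (T - m - t) + t by omega, pow_add,
            mul_assoc, hut, mul_zero, map_zero]
        calc (c • x) ^ m * φ ℓ ^ (T - m) * ((T.choose m : ℕ) : A) * φ u
            = (c • x) ^ m * ((T.choose m : ℕ) : A) * (φ ℓ ^ (T - m) * φ u) := by ring
          _ = 0 := by rw [h2, mul_zero]
    have hphi : φ u = 0 := hinj (φ u) (hext.map_mem i u hu) hker
    have huniq := hext.decomp_unique i (fun q => if q = 0 then u else 0) ?_ ?_ 0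
    · simpa using huniq
    · intro q
      by_cases h : q = 0
      · simp only [h, if_pos rfl]
        simpa using hu
      · simp [h]
    · rw [Finset.sum_eq_single 0 (fun q _ hq => by simp [hq]) (by simp)]
      simpa using hphi
  · -- surjectivity descends
    right
    intro w hw
    have hTcast : (i + (T : ℤ)) - ((e : ℕ) : ℤ) = i + (t : ℤ) := by
      push_cast [hTdef]; ring
    set fw : Fin (e + 1) → B := fun p => if p = Fin.last e then w else 0 with hfwdef
    have hfwmem : ∀ p : Fin (e + 1), fw p ∈ 𝒜 ((i + (T : ℤ)) - ((p : ℕ) : ℤ)) := by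
      intro p
      by_cases h : p = Fin.last e
      · simp only [fw, h, if_pos rfl, Fin.val_last]
        rwa [hTcast]
      · simp [fw, h]
    have hsumfw : ∑ p : Fin (e + 1), x ^ (p : ℕ) * φ (fw p) = x ^ e * φ w := by
      rw [Finset.sum_eq_single (Fin.last e) (fun p _ hp => by simp [fw, hp]) (by simp)]
      simp [fw, Fin.val_last]
    have hwmem : x ^ e * φ w ∈ ℬ (i + (T : ℤ)) := by
      have := hext.decomp_mem (i + (T : ℤ)) fw hfwmem
      rwa [hsumfw] at this
    obtain ⟨v, hv, hvL⟩ := hsurj _ hwmem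
    obtain ⟨f, hfmem, rfl⟩ := hext.decomp_exists i v hv
    -- the expansion of L^T * v
    have hexpv : L ^ T * (∑ q : Fin (e + 1), x ^ (q : ℕ) * φ (f q)) =
        ∑ p : Fin (e + 1), x ^ (p : ℕ) * φ (∑ q : Fin (e + 1),
          ((T.choose ((T - (p : ℕ)) + (q : ℕ)) : k) * c ^ ((p : ℕ) - (q : ℕ))) •
            (ℓ ^ ((T - (p : ℕ)) + (q : ℕ)) * f q)) := by
      rw [hc, Finset.mul_sum]
      have hq1 : ∀ q : Fin (e + 1), (φ ℓ + c • x) ^ T * (x ^ (q : ℕ) * φ (f q)) =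
          ∑ p : Fin (e + 1),
            ((T.choose ((T - (p : ℕ)) + (q : ℕ)) : k) * c ^ ((p : ℕ) - (q : ℕ))) •
              (x ^ (p : ℕ) * (φ ℓ ^ ((T - (p : ℕ)) + (q : ℕ)) * φ (f q))) :=
        fun q => expand_pow_mul (φ ℓ) x c e hext.x_pow T (by omega) (q : ℕ)
          (by omega) (φ (f q))
      simp only [hq1]
      rw [Finset.sum_comm]
      apply Finset.sum_congr rfl
      intro p _
      rw [map_sum, Finset.mul_sum]
      apply Finset.sum_congr rfl
      intro q _
      rw [map_smul, map_mul, map_pow, mul_smul_comm]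
    set g : Fin (e + 1) → B := fun p => ∑ q : Fin (e + 1),
      ((T.choose ((T - (p : ℕ)) + (q : ℕ)) : k) * c ^ ((p : ℕ) - (q : ℕ))) •
        (ℓ ^ ((T - (p : ℕ)) + (q : ℕ)) * f q) with hgdef
    have hgmem : ∀ p : Fin (e + 1), g p ∈ 𝒜 ((i + (T : ℤ)) - ((p : ℕ) : ℤ)) := by
      intro p
      apply Submodule.sum_mem
      intro q _
      apply Submodule.smul_mem
      have h := hB.mul_mem (hpow ((T - (p : ℕ)) + (q : ℕ))) (hfmem q)
      have hidx : ((((T - (p : ℕ)) + (q : ℕ) : ℕ)) : ℤ) + (i - ((q : ℕ) : ℤ))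
          = (i + (T : ℤ)) - ((p : ℕ) : ℤ) := by
        have hp : (p : ℕ) ≤ T := by omega
        push_cast [Nat.cast_sub hp]
        ring
      rwa [hidx] at h
    have hker : ∀ p : Fin (e + 1), g p - fw p = 0 := by
      apply hext.decomp_unique (i + (T : ℤ)) (fun p => g p - fw p)
        (fun p => Submodule.sub_mem _ (hgmem p) (hfwmem p))
      simp only [map_sub, mul_sub, Finset.sum_sub_distrib]
      rw [← hexpv, hsumfw, hvL, sub_self]
    have hglast : g (Fin.last e) = w := by
      have h := hker (Fin.last e)
      rw [hfwdef] at h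
      simp only [if_pos rfl] at h
      exact sub_eq_zero.mp h
    refine ⟨∑ q : Fin (e + 1), ((T.choose (t + (q : ℕ)) : k) * c ^ (e - (q : ℕ))) •
      (ℓ ^ (q : ℕ) * f q), ?_, ?_⟩
    · apply Submodule.sum_mem
      intro q _
      apply Submodule.smul_mem
      have h := hB.mul_mem (hpow (q : ℕ)) (hfmem q)
      have hidx : (((q : ℕ) : ℤ)) + (i - ((q : ℕ) : ℤ)) = i := by ring
      rwa [hidx] at h
    · rw [Finset.mul_sum, ← hglast, hgdef]
      apply Finset.sum_congr rfl
      intro q _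
      rw [mul_smul_comm, ← mul_assoc, ← pow_add]
      simp only [Fin.val_last]
      rw [show (T - e) + (q : ℕ) = t + (q : ℕ) by omega]
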